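/- Let G be a group generated by a finite set A, let H ≤ G, and let k ≥ 0. Then the language L_{H,k} of all words w over A such that w represents an element of H and every prefix of w represents an element within distance k of H is a regular language. -/
import Mathlib


open Classical

/-- Evaluation in `G` of a word over the alphabet `A`. -/
def wordEval {G : Type} [Group G] {A : Type} (π : A → G) (w : List A) : G :=
  (w.map π).prod

/-- `π : A → G` generates `G` (positive words suffice; the generating set is
assumed symmetric, see `SymmetricGen`). -/
def Generates {G : Type} [Group G] {A : Type} (π : A → G) : Prop :=
  ∀ g : G, ∃ w : List A, wordEval π w = g

/-- The generating set is symmetric: `A = A⁻¹`. -/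
def SymmetricGen {G : Type} [Group G] {A : Type} (π : A → G) : Prop :=
  ∀ a : A, ∃ b : A, π b = (π a)⁻¹

/-- The word length of `g` with respect to the generating map `π`. -/
noncomputable def wordLength {G : Type} [Group G] {A : Type} (π : A → G) (g : G) : ℕ :=
  sInf {n : ℕ | ∃ w : List A, w.length = n ∧ wordEval π w = g}

/-- The word metric on `G` induced by the generating map `π`. -/
noncomputable def wordDist {G : Type} [Group G] {A : Type} (π : A → G) (g h : G) : ℕ :=
  wordLength π (g⁻¹ * h)

section Aux

variable {G : Type} [Group G] {A : Type}

lemma wordEval_append (π : A → G) (w : List A) (a : A) :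
    wordEval π (w ++ [a]) = wordEval π w * π a := by
  simp [wordEval]

lemma prefix_concat_iff' {u w : List A} {a : A} :
    u <+: w ++ [a] ↔ u <+: w ∨ u = w ++ [a] := by
  constructor
  · rintro ⟨t, ht⟩
    rcases t.eq_nil_or_concat with rfl | ⟨s, b, rfl⟩
    · right; simpa using ht
    · left
      rw [List.concat_eq_append, ← List.append_assoc] at ht
      obtain ⟨h1, -⟩ := List.append_inj' ht rfl
      exact ⟨s, h1⟩
  · rintro (h | rfl)
    · exact h.trans ⟨[a], rfl⟩
    · exact List.prefix_refl _

/-- The closeness predicate on the quotient. -/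
def Close (π : A → G) (H : Subgroup G) (k : ℕ) (x : G ⧸ H) : Prop :=
  ∃ g : G, (QuotientGroup.mk g⁻¹ : G ⧸ H) = x ∧ ∃ h ∈ H, wordLength π (g⁻¹ * h) ≤ k

lemma close_iff (π : A → G) (H : Subgroup G) (k : ℕ) (g : G) :
    Close π H k (QuotientGroup.mk g⁻¹) ↔ ∃ h ∈ H, wordLength π (g⁻¹ * h) ≤ k := by
  constructor
  · rintro ⟨g', hg', h, hH, hlen⟩
    rw [QuotientGroup.eq] at hg'
    -- (g'⁻¹)⁻¹ * g⁻¹ = g' * g⁻¹ ∈ H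
    simp only [inv_inv] at hg'
    refine ⟨(g * g'⁻¹) * h, ?_, ?_⟩
    · exact H.mul_mem (by simpa using H.inv_mem hg') hH
    · have : g⁻¹ * ((g * g'⁻¹) * h) = g'⁻¹ * h := by group
      rw [this]; exact hlen
  · rintro ⟨h, hH, hlen⟩
    exact ⟨g, rfl, h, hH, hlen⟩

lemma wordLength_witness (π : A → G) (hgen : Generates π) (g : G) :
    ∃ w : List A, w.length = wordLength π g ∧ wordEval π w = g := by
  have hne : {n : ℕ | ∃ w : List A, w.length = n ∧ wordEval π w = g}.Nonempty := by
    obtain ⟨w, hw⟩ := hgen g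
    exact ⟨w.length, w, rfl, hw⟩
  exact Nat.sInf_mem hne

lemma close_finite (π : A → G) [Fintype A] (hgen : Generates π) (H : Subgroup G) (k : ℕ) :
    {x : G ⧸ H | Close π H k x}.Finite := by
  apply Set.Finite.subset
    (Set.Finite.image (fun w : List A => (QuotientGroup.mk (wordEval π w) : G ⧸ H))
      (List.finite_length_le A k))
  rintro x ⟨g, rfl, h, hH, hlen⟩
  obtain ⟨w, hwlen, hweq⟩ := wordLength_witness π hgen (g⁻¹ * h)
  refine ⟨w, le_trans (le_of_eq hwlen) hlen, ?_⟩
  rw [QuotientGroup.eq, hweq]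
  have : (g⁻¹ * h)⁻¹ * g⁻¹ = h⁻¹ := by group
  rw [this]; exact H.inv_mem hH

end Aux

/-- The language `L_{H,k}` of all words over `A` representing
elements of `H` all of whose prefixes stay within distance `k` of `H` is regular. -/
theorem regular_L_H_k {G : Type} [Group G] {A : Type} [Fintype A]
    (π : A → G) (hgen : Generates π) (H : Subgroup G) (k : ℕ) :
    Language.IsRegular ({w : List A | wordEval π w ∈ H ∧
      ∀ u : List A, u <+: w →
        ∃ h ∈ H, wordLength π ((wordEval π u)⁻¹ * h) ≤ k} : Language A) := by
  classical
  -- the condition on a prefix `u`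
  set C : List A → Prop := fun u => ∃ h ∈ H, wordLength π ((wordEval π u)⁻¹ * h) ≤ k with hC
  haveI : Fintype {x : G ⧸ H // Close π H k x} :=
    (close_finite π hgen H k).fintype
  -- state type
  let σ : Type := Option {x : G ⧸ H // Close π H k x}
  have hstart : Close π H k (QuotientGroup.mk (1 : G)) := by
    have : ((1 : G) : G ⧸ H) = QuotientGroup.mk ((1:G)⁻¹) := by simp
    rw [this, close_iff]
    refine ⟨1, H.one_mem, ?_⟩
    have : (1:G)⁻¹ * 1 = wordEval π ([] : List A) := by simp [wordEval]
    rw [this.symm] at *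
    have h0 : (0 : ℕ) ∈ {n : ℕ | ∃ w : List A, w.length = n ∧ wordEval π w = (1:G)⁻¹ * 1} :=
      ⟨[], rfl, by simp [wordEval]⟩
    calc wordLength π ((1:G)⁻¹ * 1) ≤ 0 := Nat.sInf_le h0
      _ ≤ k := Nat.zero_le k
  let M : DFA A σ :=
    { step := fun s a => s.bind (fun x =>
        if h : Close π H k ((π a)⁻¹ • x.1) then some ⟨_, h⟩ else none)
      start := some ⟨QuotientGroup.mk (1 : G), hstart⟩
      accept := {s : σ | Option.map Subtype.val s = some (QuotientGroup.mk (1 : G))} }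
  -- the state reached by `w`, when defined, is `mk (eval w)⁻¹`
  have smul_eval : ∀ (w : List A) (a : A),
      (π a)⁻¹ • (QuotientGroup.mk (wordEval π w)⁻¹ : G ⧸ H)
        = QuotientGroup.mk (wordEval π (w ++ [a]))⁻¹ := by
    intro w a
    rw [MulAction.Quotient.smul_mk, wordEval_append, mul_inv_rev, smul_eq_mul]
  have key : ∀ w : List A, (∀ u, u <+: w → C u) →
      ∃ hc : Close π H k (QuotientGroup.mk (wordEval π w)⁻¹),
        M.evalFrom M.start w = some ⟨QuotientGroup.mk (wordEval π w)⁻¹, hc⟩ := by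
    intro w
    induction w using List.reverseRecOn with
    | nil =>
      intro _
      refine ⟨by simpa [wordEval] using hstart, ?_⟩
      simp only [DFA.evalFrom_nil]
      show (some ⟨QuotientGroup.mk (1 : G), hstart⟩ : σ) = _
      congr 1
      exact Subtype.ext (by simp [wordEval])
    | append_singleton w a ih =>
      intro hP
      have hPw : ∀ u, u <+: w → C u := fun u hu => hP u (hu.trans ⟨[a], rfl⟩)
      obtain ⟨hc, hev⟩ := ih hPw
      have hCwa : C (w ++ [a]) := hP _ (List.prefix_refl _)
      have hclose : Close π H k (QuotientGroup.mk (wordEval π (w ++ [a]))⁻¹) :=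
        (close_iff π H k _).2 hCwa
      refine ⟨hclose, ?_⟩
      rw [DFA.evalFrom_append_singleton, hev]
      show (if h : Close π H k ((π a)⁻¹ • (QuotientGroup.mk (wordEval π w)⁻¹ : G ⧸ H))
          then (some ⟨(π a)⁻¹ • (QuotientGroup.mk (wordEval π w)⁻¹ : G ⧸ H), h⟩ : σ) else none) = _
      rw [dif_pos (by rw [smul_eval]; exact hclose)]
      congr 1
      exact Subtype.ext (smul_eval w a)
  have key2 : ∀ w : List A, ¬ (∀ u, u <+: w → C u) →
      M.evalFrom M.start w = none := by
    intro w
    induction w using List.reverseRecOn with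
    | nil =>
      intro hP
      exfalso
      apply hP
      intro u hu
      rcases List.prefix_nil.mp hu with rfl
      have h1 : Close π H k (QuotientGroup.mk ((1:G))⁻¹) := by simpa using hstart
      have := (close_iff π H k 1).1 h1
      simpa [hC, wordEval] using this
    | append_singleton w a ih =>
      intro hP
      by_cases hPw : ∀ u, u <+: w → C u
      · obtain ⟨hc, hev⟩ := key w hPw
        have hnC : ¬ C (w ++ [a]) := by
          intro hCwa
          exact hP (fun u hu => by
            rcases prefix_concat_iff'.mp hu with h | rfl
            · exact hPw u h
            · exact hCwa)
        rw [DFA.evalFrom_append_singleton, hev]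
        show (if h : Close π H k ((π a)⁻¹ • (QuotientGroup.mk (wordEval π w)⁻¹ : G ⧸ H))
            then (some ⟨(π a)⁻¹ • (QuotientGroup.mk (wordEval π w)⁻¹ : G ⧸ H), h⟩ : σ) else none) = none
        rw [dif_neg]
        rw [smul_eval]
        exact fun h => hnC ((close_iff π H k _).1 h)
      · rw [DFA.evalFrom_append_singleton, ih hPw]
        rfl
  refine ⟨σ, inferInstance, M, ?_⟩
  ext w
  show w ∈ M.accepts ↔ (wordEval π w ∈ H ∧ ∀ u, u <+: w → C u)
  rw [iff_comm]
  constructor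
  · rintro ⟨hmem, hP⟩
    obtain ⟨hc, hev⟩ := key w hP
    show M.evalFrom M.start w ∈ M.accept
    rw [hev]
    show some ((QuotientGroup.mk (wordEval π w)⁻¹ : G ⧸ H)) = some (QuotientGroup.mk (1 : G))
    congr 1
    rw [QuotientGroup.eq]
    simpa using hmem
  · intro hacc
    have hev := hacc
    change M.evalFrom M.start w ∈ M.accept at hev
    by_cases hP : ∀ u, u <+: w → C u
    · obtain ⟨hc, heval⟩ := key w hP
      rw [heval] at hev
      have : (QuotientGroup.mk (wordEval π w)⁻¹ : G ⧸ H) = QuotientGroup.mk (1 : G) := by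
        simpa [M] using hev
      rw [QuotientGroup.eq] at this
      simp only [inv_inv, mul_one] at this
      exact ⟨this, hP⟩
    · rw [key2 w hP] at hev
      simp [M] at hev
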